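/- Let K be an infinite field and f(x,y) = xy − yx. For every n ≥ 2, the image f(T_n(K)) equals the set of all strictly upper triangular n × n matrices: every strictly upper triangular matrix over K is a commutator [A,B] of two upper triangular matrices. -/

import Mathlib

/-- `A` is upper triangular. -/
def UT {K : Type*} [Field K] {n : ℕ} (A : Matrix (Fin n) (Fin n) K) : Prop :=
  ∀ i j : Fin n, (j : ℕ) < (i : ℕ) → A i j = 0

theorem stmt_15 {K : Type*} [Field K] [Infinite K] (n : ℕ) (hn : 2 ≤ n) :
    ∀ C : Matrix (Fin n) (Fin n) K,
      (∀ i j : Fin n, (j : ℕ) ≤ (i : ℕ) → C i j = 0) ↔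
      ∃ A B : Matrix (Fin n) (Fin n) K, UT A ∧ UT B ∧ A * B - B * A = C := by
  intro C
  let e : ℕ ↪ K := Infinite.natEmbedding K
  set d : Fin n → K := fun i => e i with hd
  have hdinj : ∀ i j : Fin n, i ≠ j → d i ≠ d j := by
    intro i j hij h
    exact hij (Fin.ext (by exact_mod_cast e.injective h))
  constructor
  · intro hC
    refine ⟨Matrix.diagonal d, fun i j => C i j / (d i - d j), ?_, ?_, ?_⟩
    · intro i j h
      exact Matrix.diagonal_apply_ne d (fun hh => by subst hh; omega)
    · intro i j h
      show C i j / (d i - d j) = 0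
      rw [hC i j h.le, zero_div]
    · ext i j
      erw [Matrix.sub_apply, Matrix.diagonal_mul, Matrix.mul_diagonal]
      rcases eq_or_ne i j with rfl | hij
      · simp [hC i i le_rfl]
      · have hne : d i - d j ≠ 0 := sub_ne_zero.mpr (hdinj i j hij)
        field_simp
  · rintro ⟨A, B, hA, hB, rfl⟩ i j hji
    simp only [Matrix.sub_apply, Matrix.mul_apply]
    rcases lt_or_eq_of_le hji with h | h
    · have h1 : ∀ k ∈ Finset.univ, A i k * B k j = 0 := by
        intro k _
        rcases lt_or_ge (k : ℕ) (i : ℕ) with hk | hk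
        · rw [hA i k hk, zero_mul]
        · rw [hB k j (lt_of_lt_of_le h hk), mul_zero]
      have h2 : ∀ k ∈ Finset.univ, B i k * A k j = 0 := by
        intro k _
        rcases lt_or_ge (k : ℕ) (i : ℕ) with hk | hk
        · rw [hB i k hk, zero_mul]
        · rw [hA k j (lt_of_lt_of_le h hk), mul_zero]
      rw [Finset.sum_eq_zero h1, Finset.sum_eq_zero h2, sub_zero]
    · obtain rfl : i = j := Fin.ext h.symm
      have h1 : ∑ k, A i k * B k i = A i i * B i i := by
        apply Finset.sum_eq_single i
        · intro k _ hk
          rcases lt_or_ge (k : ℕ) (i : ℕ) with hkk | hkk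
          · rw [hA i k hkk, zero_mul]
          · have : (i : ℕ) < k := lt_of_le_of_ne hkk (by
              intro hh; exact hk (Fin.ext hh.symm))
            rw [hB k i this, mul_zero]
        · intro h; exact absurd (Finset.mem_univ i) h
      have h2 : ∑ k, B i k * A k i = B i i * A i i := by
        apply Finset.sum_eq_single i
        · intro k _ hk
          rcases lt_or_ge (k : ℕ) (i : ℕ) with hkk | hkk
          · rw [hB i k hkk, zero_mul]
          · have : (i : ℕ) < k := lt_of_le_of_ne hkk (by
              intro hh; exact hk (Fin.ext hh.symm))
            rw [hA k i this, mul_zero]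
        · intro h; exact absurd (Finset.mem_univ i) h
      rw [h1, h2, mul_comm, sub_self]
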